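/- Suppose G is independent of U, E(A|G,U) = α_g(G) + α_u(U) almost surely for measurable functions α_g of G and α_u of U, and D is an integrable random variable such that E(D|A,G,U) = k(U) almost surely for some integrable measurable function k of U. Then E[D·{G−E(G)}] = 0 and E[D·{G−E(G)}·{A−E(A|G)}] = 0. -/

import Mathlib

open MeasureTheory ProbabilityTheory

/-- Conditional expectation of the real random variable `X` given the σ-algebra
generated by the random variable `Z`. -/
noncomputable def cExp {Ω β : Type*} [MeasurableSpace Ω] [mβ : MeasurableSpace β]
    (μ : Measure Ω) (Z : Ω → β) (X : Ω → ℝ) : Ω → ℝ :=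
  μ[X | MeasurableSpace.comap Z mβ]

/-- Conditional covariance `cov(X, W | Z) = E(XW|Z) - E(X|Z)E(W|Z)`. -/
noncomputable def cCov {Ω β : Type*} [MeasurableSpace Ω] [mβ : MeasurableSpace β]
    (μ : Measure Ω) (Z : Ω → β) (X W : Ω → ℝ) : Ω → ℝ :=
  fun ω => cExp μ Z (fun ω' => X ω' * W ω') ω - cExp μ Z X ω * cExp μ Z W ω

/-- Conditional variance `var(X | Z) = E(X²|Z) - E(X|Z)²`. -/
noncomputable def cVar {Ω β : Type*} [MeasurableSpace Ω] [mβ : MeasurableSpace β]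
    (μ : Measure Ω) (Z : Ω → β) (X : Ω → ℝ) : Ω → ℝ :=
  fun ω => cExp μ Z (fun ω' => X ω' ^ 2) ω - (cExp μ Z X ω) ^ 2

/-- Tower/pull-out: `∫ f·g = ∫ f·E[g|m]` when `f` is `m`-measurable. -/
lemma integral_smul_condexp' {Ω : Type*} {m m0 : MeasurableSpace Ω} (hm : m ≤ m0)
    {μ : Measure Ω} [IsFiniteMeasure μ] {f g : Ω → ℝ}
    (hf : StronglyMeasurable[m] f) (hfg : Integrable (fun ω => f ω * g ω) μ)
    (hg : Integrable g μ) :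
    ∫ ω, f ω * g ω ∂μ = ∫ ω, f ω * (μ[g|m]) ω ∂μ := by
  calc ∫ ω, f ω * g ω ∂μ
      = ∫ ω, (μ[fun ω => f ω * g ω|m]) ω ∂μ := (integral_condExp hm).symm
    _ = ∫ ω, f ω * (μ[g|m]) ω ∂μ :=
        integral_congr_ae (condExp_mul_of_stronglyMeasurable_left hf hfg hg)

/-- core moment computation for MR GENIUS with censored survival
outcomes, Lemma 4.4. If `G ⫫ U`, `E(A|G,U) = α_g(G) + α_u(U)` a.s., and `D` is an
integrable random variable with `E(D|A,G,U) = k(U)` a.s., then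
`E[D·{G−E(G)}] = 0` and `E[D·{G−E(G)}·{A−E(A|G)}] = 0`. -/
theorem stmt12 {Ω 𝓤 : Type*} [MeasurableSpace Ω] [MeasurableSpace 𝓤]
    (μ : Measure Ω) [IsProbabilityMeasure μ]
    (A G D : Ω → ℝ) (U : Ω → 𝓤)
    (hAm : Measurable A) (hGm : Measurable G) (hDm : Measurable D) (hUm : Measurable U)
    (αg : ℝ → ℝ) (αu k : 𝓤 → ℝ)
    (hαgm : Measurable αg) (hαum : Measurable αu) (hkm : Measurable k)
    -- G is independent of U
    (hIndep : IndepFun G U μ)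
    -- E(A|G,U) = α_g(G) + α_u(U) almost surely
    (hexp : cExp μ (fun ω => (G ω, U ω)) A =ᵐ[μ] fun ω => αg (G ω) + αu (U ω))
    -- E(D|A,G,U) = k(U) almost surely
    (hD : cExp μ (fun ω => (A ω, G ω, U ω)) D =ᵐ[μ] fun ω => k (U ω))
    -- all expectations appearing in the statement are assumed finite
    (hIntG : Integrable G μ) (hIntA : Integrable A μ) (hIntD : Integrable D μ)
    (hIntk : Integrable (fun ω => k (U ω)) μ)
    (hInt1 : Integrable (fun ω => D ω * (G ω - ∫ ω', G ω' ∂μ)) μ)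
    (hInt2 : Integrable
      (fun ω => D ω * (G ω - ∫ ω', G ω' ∂μ) * (A ω - cExp μ G A ω)) μ) :
    (∫ ω, D ω * (G ω - ∫ ω', G ω' ∂μ) ∂μ = 0) ∧
    (∫ ω, D ω * (G ω - ∫ ω', G ω' ∂μ) * (A ω - cExp μ G A ω) ∂μ = 0) := by
  simp only [cExp] at hexp hD hInt2 ⊢
  have hZm : Measurable fun ω => (A ω, G ω, U ω) := hAm.prodMk (hGm.prodMk hUm)
  have hWm : Measurable fun ω => (G ω, U ω) := hGm.prodMk hUm
  set c : ℝ := ∫ ω', G ω' ∂μ with hc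
  have hmAGU := hZm.comap_le
  have hmGU := hWm.comap_le
  have hmG := hGm.comap_le
  -- measurability with respect to the sub-σ-algebras
  have hZ1 : Measurable[MeasurableSpace.comap (fun ω => (A ω, G ω, U ω)) inferInstance]
      (fun ω => (A ω, G ω, U ω)) := comap_measurable _
  have hA1 := measurable_fst.comp hZ1
  have hG1 := (measurable_fst.comp measurable_snd).comp hZ1
  have hU1 := (measurable_snd.comp measurable_snd).comp hZ1
  have hW1 : Measurable[MeasurableSpace.comap (fun ω => (G ω, U ω)) inferInstance]
      (fun ω => (G ω, U ω)) := comap_measurable _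
  have hG2 := measurable_fst.comp hW1
  have hU2 := measurable_snd.comp hW1
  have hG3 : Measurable[MeasurableSpace.comap G inferInstance] G := comap_measurable _
  have hG_le_AGU := hG1.comap_le
  have hG_le_GU := hG2.comap_le
  -- Part 1 preliminaries
  have hintGc : ∫ ω, (G ω - c) ∂μ = 0 := by
    rw [integral_sub hIntG (integrable_const c), integral_const, probReal_univ,
      one_smul, sub_self]
  have hfSM : StronglyMeasurable[MeasurableSpace.comap (fun ω => (A ω, G ω, U ω)) inferInstance]
      (fun ω => G ω - c) := (hG1.sub measurable_const).stronglyMeasurable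
  have hIntfD : Integrable (fun ω => (G ω - c) * D ω) μ :=
    hInt1.congr (Filter.Eventually.of_forall fun ω => mul_comm _ _)
  have part1 : ∫ ω, D ω * (G ω - c) ∂μ = 0 := by
    calc ∫ ω, D ω * (G ω - c) ∂μ
        = ∫ ω, (G ω - c) * D ω ∂μ :=
          integral_congr_ae (Filter.Eventually.of_forall fun ω => mul_comm _ _)
      _ = ∫ ω, (G ω - c) *
          (μ[D | MeasurableSpace.comap (fun ω => (A ω, G ω, U ω)) inferInstance]) ω ∂μ :=
          integral_smul_condexp' hmAGU hfSM hIntfD hIntD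
      _ = ∫ ω, (G ω - c) * k (U ω) ∂μ := by
          refine integral_congr_ae ?_
          filter_upwards [hD] with ω h
          rw [h]
      _ = (∫ ω, (G ω - c) ∂μ) * ∫ ω, k (U ω) ∂μ := by
          have hind : IndepFun (fun ω => G ω - c) (fun ω => k (U ω)) μ :=
            hIndep.comp (measurable_id.sub measurable_const) hkm
          exact hind.integral_fun_mul_eq_mul_integral (hGm.sub measurable_const).aestronglyMeasurable
            (hkm.comp hUm).aestronglyMeasurable
      _ = 0 := by rw [hintGc, zero_mul]
  -- integrability of αg(G) and αu(U)
  have hsum : Integrable (fun ω => αg (G ω) + αu (U ω)) μ := integrable_condExp.congr hexp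
  have hmap : μ.map (fun ω => (G ω, U ω)) = (μ.map G).prod (μ.map U) :=
    (indepFun_iff_map_prod_eq_prod_map_map hGm.aemeasurable hUm.aemeasurable).mp hIndep
  haveI : IsProbabilityMeasure (μ.map U) := Measure.isProbabilityMeasure_map hUm.aemeasurable
  haveI : IsProbabilityMeasure (μ.map G) := Measure.isProbabilityMeasure_map hGm.aemeasurable
  have hintp : Integrable (fun p : ℝ × 𝓤 => αg p.1 + αu p.2) ((μ.map G).prod (μ.map U)) := by
    rw [← hmap]
    exact (integrable_map_measure
      ((hαgm.comp measurable_fst).add (hαum.comp measurable_snd)).aestronglyMeasurable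
      hWm.aemeasurable).mpr hsum
  haveI : (ae (μ.map U)).NeBot := ae_neBot.mpr (IsProbabilityMeasure.ne_zero _)
  obtain ⟨u₀, hu₀⟩ := hintp.prod_left_ae.exists
  have hαgL : Integrable αg (μ.map G) := by
    have h := hu₀.sub (integrable_const (αu u₀))
    exact h.congr (Filter.Eventually.of_forall fun x => by simp)
  have hIntαgG : Integrable (fun ω => αg (G ω)) μ :=
    (integrable_map_measure hαgm.aestronglyMeasurable hGm.aemeasurable).mp hαgL
  have hIntαuU : Integrable (fun ω => αu (U ω)) μ := by
    have h := hsum.sub hIntαgG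
    exact h.congr (Filter.Eventually.of_forall fun ω => by simp)
  set cu : ℝ := ∫ ω, αu (U ω) ∂μ with hcu
  -- compute E(A | σ(G))
  have hEA : (μ[A | MeasurableSpace.comap G inferInstance]) =ᵐ[μ]
      fun ω => αg (G ω) + cu := by
    have h1 : μ[μ[A | MeasurableSpace.comap (fun ω => (G ω, U ω)) inferInstance]
          | MeasurableSpace.comap G inferInstance]
        =ᵐ[μ] μ[A | MeasurableSpace.comap G inferInstance] :=
      condExp_condExp_of_le hG_le_GU hmGU
    have h2 : μ[μ[A | MeasurableSpace.comap (fun ω => (G ω, U ω)) inferInstance]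
          | MeasurableSpace.comap G inferInstance]
        =ᵐ[μ] μ[(fun ω => αg (G ω) + αu (U ω)) | MeasurableSpace.comap G inferInstance] :=
      condExp_congr_ae hexp
    have h3 : μ[(fun ω => αg (G ω) + αu (U ω)) | MeasurableSpace.comap G inferInstance]
        =ᵐ[μ] μ[(fun ω => αg (G ω)) | MeasurableSpace.comap G inferInstance]
          + μ[(fun ω => αu (U ω)) | MeasurableSpace.comap G inferInstance] :=
      condExp_add hIntαgG hIntαuU _
    have h4 : μ[(fun ω => αg (G ω)) | MeasurableSpace.comap G inferInstance]
        = fun ω => αg (G ω) :=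
      condExp_of_stronglyMeasurable hmG (hαgm.comp hG3).stronglyMeasurable hIntαgG
    have h5 : μ[(fun ω => αu (U ω)) | MeasurableSpace.comap G inferInstance]
        =ᵐ[μ] fun _ => cu := by
      exact condExp_indep_eq hUm.comap_le hmG
        (hαum.comp (comap_measurable U)).stronglyMeasurable
        ((IndepFun_iff_Indep U G μ).mp hIndep.symm)
    filter_upwards [h1, h2, h3, h5] with ω e1 e2 e3 e5
    rw [← e1, e2, e3, Pi.add_apply, h4, e5]
  -- Part 2
  set E : Ω → ℝ := μ[A | MeasurableSpace.comap G inferInstance] with hE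
  have hf2SM : StronglyMeasurable[MeasurableSpace.comap (fun ω => (A ω, G ω, U ω)) inferInstance]
      (fun ω => (G ω - c) * (A ω - E ω)) :=
    (hG1.sub measurable_const).stronglyMeasurable.mul
      (hA1.stronglyMeasurable.sub (stronglyMeasurable_condExp.mono hG_le_AGU))
  have hIntf2D : Integrable (fun ω => ((G ω - c) * (A ω - E ω)) * D ω) μ :=
    hInt2.congr (Filter.Eventually.of_forall fun ω => by ring)
  have hf3SM : StronglyMeasurable[MeasurableSpace.comap (fun ω => (G ω, U ω)) inferInstance]
      (fun ω => (G ω - c) * k (U ω)) :=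
    (hG2.sub measurable_const).stronglyMeasurable.mul (hkm.comp hU2).stronglyMeasurable
  have hIntAE : Integrable (fun ω => A ω - E ω) μ := hIntA.sub integrable_condExp
  have hIntf3 : Integrable (fun ω => ((G ω - c) * k (U ω)) * (A ω - E ω)) μ := by
    have h := condExp_mul_of_stronglyMeasurable_left hf2SM hIntf2D hIntD
    have h2 : (fun ω => ((G ω - c) * k (U ω)) * (A ω - E ω))
        =ᵐ[μ] μ[(fun ω => (G ω - c) * (A ω - E ω)) * D
          | MeasurableSpace.comap (fun ω => (A ω, G ω, U ω)) inferInstance] := by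
      filter_upwards [h, hD] with ω h1 hD1
      rw [h1, Pi.mul_apply, hD1]
      ring
    exact integrable_condExp.congr h2.symm
  have hcondAE : μ[(fun ω => A ω - E ω) | MeasurableSpace.comap (fun ω => (G ω, U ω)) inferInstance]
      =ᵐ[μ] fun ω => αu (U ω) - cu := by
    have hsub : μ[(fun ω => A ω - E ω) | MeasurableSpace.comap (fun ω => (G ω, U ω)) inferInstance]
        =ᵐ[μ] μ[A | MeasurableSpace.comap (fun ω => (G ω, U ω)) inferInstance]
          - μ[E | MeasurableSpace.comap (fun ω => (G ω, U ω)) inferInstance] :=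
      condExp_sub hIntA integrable_condExp _
    have hE' : μ[E | MeasurableSpace.comap (fun ω => (G ω, U ω)) inferInstance] = E :=
      condExp_of_stronglyMeasurable hmGU (stronglyMeasurable_condExp.mono hG_le_GU)
        integrable_condExp
    filter_upwards [hsub, hexp, hEA] with ω e1 e2 e3
    rw [e1, Pi.sub_apply, hE', e2, e3]
    ring
  have part2 : ∫ ω, D ω * (G ω - c) * (A ω - E ω) ∂μ = 0 := by
    calc ∫ ω, D ω * (G ω - c) * (A ω - E ω) ∂μ
        = ∫ ω, ((G ω - c) * (A ω - E ω)) * D ω ∂μ :=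
          integral_congr_ae (Filter.Eventually.of_forall fun ω => by ring)
      _ = ∫ ω, ((G ω - c) * (A ω - E ω)) *
          (μ[D | MeasurableSpace.comap (fun ω => (A ω, G ω, U ω)) inferInstance]) ω ∂μ :=
          integral_smul_condexp' hmAGU hf2SM hIntf2D hIntD
      _ = ∫ ω, ((G ω - c) * k (U ω)) * (A ω - E ω) ∂μ := by
          refine integral_congr_ae ?_
          filter_upwards [hD] with ω h
          rw [h]; ring
      _ = ∫ ω, ((G ω - c) * k (U ω)) *
          (μ[(fun ω => A ω - E ω) | MeasurableSpace.comap (fun ω => (G ω, U ω)) inferInstance]) ω ∂μ :=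
          integral_smul_condexp' hmGU hf3SM hIntf3 hIntAE
      _ = ∫ ω, (G ω - c) * (k (U ω) * (αu (U ω) - cu)) ∂μ := by
          refine integral_congr_ae ?_
          filter_upwards [hcondAE] with ω h
          rw [h]; ring
      _ = (∫ ω, (G ω - c) ∂μ) * ∫ ω, k (U ω) * (αu (U ω) - cu) ∂μ := by
          have hind : IndepFun (fun ω => G ω - c) (fun ω => k (U ω) * (αu (U ω) - cu)) μ :=
            hIndep.comp (measurable_id.sub measurable_const)
              (hkm.mul (hαum.sub measurable_const))
          exact hind.integral_fun_mul_eq_mul_integral (hGm.sub measurable_const).aestronglyMeasurable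
            ((hkm.mul (hαum.sub measurable_const)).comp hUm).aestronglyMeasurable
      _ = 0 := by rw [hintGc, zero_mul]
  exact ⟨part1, part2⟩
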